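/- Define 𝝉 : [0,1] → [0,1] by 𝝉(x) = 6x on [0, 1/10], 𝝉(x) = 4x + 1/5 on (1/10, 1/5), and 𝝉(x) = 5x − 1 on [1/5, 2/5), 5x − 2 on [2/5, 3/5), 5x − 3 on [3/5, 4/5), 5x − 4 on [4/5, 1] (i.e. 𝝉(x) = 5x mod 1 on [1/5,1]). Let f = (30/31)·1_{[0,3/5)} + (65/62)·1_{[3/5,1]}. Then f is a probability density and the measure f·λ_Leb is invariant under 𝝉, i.e. (f·λ_Leb)(𝝉⁻¹(A)) = (f·λ_Leb)(A) for every Borel set A ⊆ [0,1]. -/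

import Mathlib

open MeasureTheory Set Filter
open scoped ENNReal

/-- Lebesgue measure restricted to the unit interval `[0,1]`. -/
noncomputable def leb01 : Measure ℝ := volume.restrict (Set.Icc (0:ℝ) 1)

/-- The measure `f · λ_Leb` with density `f` with respect to Lebesgue measure on `[0,1]`. -/
noncomputable def densMeasure (f : ℝ → ℝ) : Measure ℝ :=
  leb01.withDensity (fun x => ENNReal.ofReal (f x))

/-- `f` is a probability density on `[0,1]`. -/
def IsDensity (f : ℝ → ℝ) : Prop :=
  Measurable f ∧ (∀ x, 0 ≤ f x) ∧ (∫ x in Set.Icc (0:ℝ) 1, f x = 1)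

/-- The map `x ↦ 5x mod 1` on `[1/5, 1]`, written with explicit branches. -/
noncomputable def fiveXmod1 : ℝ → ℝ := fun x =>
  if x < 2/5 then 5*x - 1 else if x < 3/5 then 5*x - 2
  else if x < 4/5 then 5*x - 3 else 5*x - 4

/-- The selector of Example 3 of the paper. -/
noncomputable def selEx3 : ℝ → ℝ := fun x =>
  if x ≤ 1/10 then 6*x else if x < 1/5 then 4*x + 1/5 else fiveXmod1 x

/-- The invariant density of the selector of Example 3 of the paper. -/
noncomputable def fEx3 : ℝ → ℝ := fun x => if x < 3/5 then 30/31 else 65/62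

lemma meas_selEx3 : Measurable selEx3 := by
  unfold selEx3 fiveXmod1
  refine Measurable.ite (measurableSet_Iic (a := (1:ℝ)/10)) (by fun_prop) ?_
  refine Measurable.ite (measurableSet_Iio) (by fun_prop) ?_
  refine Measurable.ite (measurableSet_Iio) (by fun_prop) ?_
  refine Measurable.ite (measurableSet_Iio) (by fun_prop) ?_
  exact Measurable.ite (measurableSet_Iio) (by fun_prop) (by fun_prop)

lemma meas_fEx3 : Measurable fEx3 :=
  Measurable.ite measurableSet_Iio measurable_const measurable_const

lemma vol_Icc_inter_Iic (l r b : ℝ) :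
    volume (Icc l r ∩ Iic b) = ENNReal.ofReal (min r b - l) := by
  rcases le_total r b with h | h
  · have e : Icc l r ∩ Iic b = Icc l r := inter_eq_left.mpr (fun x hx => le_trans hx.2 h)
    rw [min_eq_left h, e, Real.volume_Icc]
  · have : Icc l r ∩ Iic b = Icc l b := by
      ext x; simp only [mem_inter_iff, mem_Icc, mem_Iic]
      constructor
      · rintro ⟨⟨h1, h2⟩, h3⟩; exact ⟨h1, h3⟩
      · rintro ⟨h1, h2⟩; exact ⟨⟨h1, le_trans h2 h⟩, h2⟩
    rw [min_eq_right h, this, Real.volume_Icc]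

lemma vol_Ico_inter_Iic (l r b : ℝ) :
    volume (Ico l r ∩ Iic b) = ENNReal.ofReal (min r b - l) := by
  rcases lt_or_ge b r with h | h
  · have : Ico l r ∩ Iic b = Icc l b := by
      ext x; simp only [mem_inter_iff, mem_Ico, mem_Iic, mem_Icc]
      constructor
      · rintro ⟨⟨h1, h2⟩, h3⟩; exact ⟨h1, h3⟩
      · rintro ⟨h1, h2⟩; exact ⟨⟨h1, lt_of_le_of_lt h2 h⟩, h2⟩
    rw [min_eq_right h.le, this, Real.volume_Icc]
  · have e : Ico l r ∩ Iic b = Ico l r := inter_eq_left.mpr (fun x hx => le_trans hx.2.le h)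
    rw [min_eq_left h, e, Real.volume_Ico]

lemma vol_Ioo_inter_Iic (l r b : ℝ) :
    volume (Ioo l r ∩ Iic b) = ENNReal.ofReal (min r b - l) := by
  rcases lt_or_ge b r with h | h
  · have : Ioo l r ∩ Iic b = Ioc l b := by
      ext x; simp only [mem_inter_iff, mem_Ioo, mem_Iic, mem_Ioc]
      constructor
      · rintro ⟨⟨h1, h2⟩, h3⟩; exact ⟨h1, h3⟩
      · rintro ⟨h1, h2⟩; exact ⟨⟨h1, lt_of_le_of_lt h2 h⟩, h2⟩
    rw [min_eq_right h.le, this, Real.volume_Ioc]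
  · have e : Ioo l r ∩ Iic b = Ioo l r := inter_eq_left.mpr (fun x hx => le_trans hx.2.le h)
    rw [min_eq_left h, e, Real.volume_Ioo]

set_option maxHeartbeats 1600000 in
lemma pre_Iic (a : ℝ) : selEx3 ⁻¹' (Iic a) ∩ Icc 0 1 =
    (Icc (0:ℝ) (1/10) ∩ Iic (a/6)) ∪ (Ioo (1/10) (1/5) ∩ Iic ((a-1/5)/4)) ∪
    (Ico (1/5) (2/5) ∩ Iic ((a+1)/5)) ∪ (Ico (2/5) (3/5) ∩ Iic ((a+2)/5)) ∪
    (Ico (3/5) (4/5) ∩ Iic ((a+3)/5)) ∪ (Icc (4/5) 1 ∩ Iic ((a+4)/5)) := by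
  ext x
  simp only [mem_inter_iff, mem_preimage, mem_Iic, mem_Icc, selEx3, fiveXmod1, mem_union,
    mem_Ioo, mem_Ico]
  split_ifs with h1 h2 h3 h4 h5
  · constructor
    · rintro ⟨h, h0, _⟩
      exact Or.inl <| Or.inl <| Or.inl <| Or.inl <| Or.inl ⟨⟨h0, h1⟩, by linarith⟩
    · rintro (((((⟨⟨u, v⟩, w⟩ | ⟨⟨u, v⟩, w⟩) | ⟨⟨u, v⟩, w⟩) | ⟨⟨u, v⟩, w⟩) | ⟨⟨u, v⟩, w⟩) |
        ⟨⟨u, v⟩, w⟩) <;> exact ⟨by linarith, by linarith, by linarith⟩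
  · constructor
    · rintro ⟨h, h0, _⟩
      exact Or.inl <| Or.inl <| Or.inl <| Or.inl <| Or.inr ⟨⟨by linarith, h2⟩, by linarith⟩
    · rintro (((((⟨⟨u, v⟩, w⟩ | ⟨⟨u, v⟩, w⟩) | ⟨⟨u, v⟩, w⟩) | ⟨⟨u, v⟩, w⟩) | ⟨⟨u, v⟩, w⟩) |
        ⟨⟨u, v⟩, w⟩) <;> exact ⟨by linarith, by linarith, by linarith⟩
  · constructor
    · rintro ⟨h, h0, _⟩
      exact Or.inl <| Or.inl <| Or.inl <| Or.inr ⟨⟨by linarith, h3⟩, by linarith⟩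
    · rintro (((((⟨⟨u, v⟩, w⟩ | ⟨⟨u, v⟩, w⟩) | ⟨⟨u, v⟩, w⟩) | ⟨⟨u, v⟩, w⟩) | ⟨⟨u, v⟩, w⟩) |
        ⟨⟨u, v⟩, w⟩) <;> exact ⟨by linarith, by linarith, by linarith⟩
  · constructor
    · rintro ⟨h, h0, _⟩
      exact Or.inl <| Or.inl <| Or.inr ⟨⟨by linarith, h4⟩, by linarith⟩
    · rintro (((((⟨⟨u, v⟩, w⟩ | ⟨⟨u, v⟩, w⟩) | ⟨⟨u, v⟩, w⟩) | ⟨⟨u, v⟩, w⟩) | ⟨⟨u, v⟩, w⟩) |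
        ⟨⟨u, v⟩, w⟩) <;> exact ⟨by linarith, by linarith, by linarith⟩
  · constructor
    · rintro ⟨h, h0, _⟩
      exact Or.inl <| Or.inr ⟨⟨by linarith, h5⟩, by linarith⟩
    · rintro (((((⟨⟨u, v⟩, w⟩ | ⟨⟨u, v⟩, w⟩) | ⟨⟨u, v⟩, w⟩) | ⟨⟨u, v⟩, w⟩) | ⟨⟨u, v⟩, w⟩) |
        ⟨⟨u, v⟩, w⟩) <;> exact ⟨by linarith, by linarith, by linarith⟩
  · constructor
    · rintro ⟨h, h0, hx1⟩
      exact Or.inr ⟨⟨by linarith, hx1⟩, by linarith⟩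
    · rintro (((((⟨⟨u, v⟩, w⟩ | ⟨⟨u, v⟩, w⟩) | ⟨⟨u, v⟩, w⟩) | ⟨⟨u, v⟩, w⟩) | ⟨⟨u, v⟩, w⟩) |
        ⟨⟨u, v⟩, w⟩) <;> exact ⟨by linarith, by linarith, by linarith⟩

lemma densMeasure_inter_Icc {A : Set ℝ} (hA : MeasurableSet A) :
    densMeasure fEx3 A = densMeasure fEx3 (A ∩ Icc 0 1) := by
  rw [densMeasure, leb01, withDensity_apply _ hA,
    withDensity_apply _ (hA.inter measurableSet_Icc), Measure.restrict_restrict hA,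
    Measure.restrict_restrict (hA.inter measurableSet_Icc), inter_assoc, inter_self]

lemma densMeasure_const {A : Set ℝ} (hA : MeasurableSet A) (hsub : A ⊆ Icc 0 1) {c : ℝ}
    (hc : ∀ x ∈ A, fEx3 x = c) :
    densMeasure fEx3 A = ENNReal.ofReal c * volume A := by
  rw [densMeasure, leb01, withDensity_apply _ hA, Measure.restrict_restrict hA,
    inter_eq_left.mpr hsub]
  calc ∫⁻ x in A, ENNReal.ofReal (fEx3 x) ∂volume
      = ∫⁻ _ in A, ENNReal.ofReal c ∂volume :=
        setLIntegral_congr_fun hA (fun x hx => by rw [hc x hx])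
    _ = ENNReal.ofReal c * volume A := setLIntegral_const _ _

lemma fEx3_left {x : ℝ} (h : x < 3/5) : fEx3 x = 30/31 := if_pos h
lemma fEx3_right {x : ℝ} (h : 3/5 ≤ x) : fEx3 x = 65/62 := if_neg (not_lt.mpr h)

instance : IsFiniteMeasure (densMeasure fEx3) := by
  constructor
  rw [densMeasure, withDensity_apply _ MeasurableSet.univ, Measure.restrict_univ]
  calc ∫⁻ x, ENNReal.ofReal (fEx3 x) ∂leb01
      ≤ ∫⁻ _, ENNReal.ofReal (65/62) ∂leb01 :=
        lintegral_mono fun x => ENNReal.ofReal_le_ofReal (by unfold fEx3; split_ifs <;> norm_num)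
    _ = ENNReal.ofReal (65/62) * leb01 univ := lintegral_const _
    _ < ⊤ := by
        rw [leb01, Measure.restrict_apply_univ, Real.volume_Icc]
        exact ENNReal.mul_lt_top ENNReal.ofReal_lt_top ENNReal.ofReal_lt_top

lemma ofReal5_eq_ofReal1 {a1 a2 a3 a4 a5 b : ℝ} (h1 : 0 ≤ a1) (h2 : 0 ≤ a2) (h3 : 0 ≤ a3)
    (h4 : 0 ≤ a4) (h5 : 0 ≤ a5) (h : a1 + a2 + a3 + a4 + a5 = b) :
    ENNReal.ofReal a1 + ENNReal.ofReal a2 + ENNReal.ofReal a3 + ENNReal.ofReal a4 +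
      ENNReal.ofReal a5 = ENNReal.ofReal b := by
  rw [← ENNReal.ofReal_add h1 h2, ← ENNReal.ofReal_add (by linarith) h3,
    ← ENNReal.ofReal_add (by linarith) h4, ← ENNReal.ofReal_add (by linarith) h5, h]

lemma ofReal6_eq_ofReal2 {a1 a2 a3 a4 a5 a6 b1 b2 : ℝ} (h1 : 0 ≤ a1) (h2 : 0 ≤ a2) (h3 : 0 ≤ a3)
    (h4 : 0 ≤ a4) (h5 : 0 ≤ a5) (h6 : 0 ≤ a6) (hb1 : 0 ≤ b1) (hb2 : 0 ≤ b2)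
    (h : a1 + a2 + a3 + a4 + a5 + a6 = b1 + b2) :
    ENNReal.ofReal a1 + ENNReal.ofReal a2 + ENNReal.ofReal a3 + ENNReal.ofReal a4 +
      ENNReal.ofReal a5 + ENNReal.ofReal a6 = ENNReal.ofReal b1 + ENNReal.ofReal b2 := by
  rw [← ENNReal.ofReal_add h1 h2, ← ENNReal.ofReal_add (by linarith) h3,
    ← ENNReal.ofReal_add (by linarith) h4, ← ENNReal.ofReal_add (by linarith) h5,
    ← ENNReal.ofReal_add (by linarith) h6, h, ENNReal.ofReal_add hb1 hb2]

lemma keyEx3 (a : ℝ) :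
    ENNReal.ofReal (30/31) * ENNReal.ofReal (min (1/10) (a/6) - 0) +
    ENNReal.ofReal (30/31) * ENNReal.ofReal (min (1/5) ((a-1/5)/4) - 1/10) +
    ENNReal.ofReal (30/31) * ENNReal.ofReal (min (2/5) ((a+1)/5) - 1/5) +
    ENNReal.ofReal (30/31) * ENNReal.ofReal (min (3/5) ((a+2)/5) - 2/5) +
    ENNReal.ofReal (65/62) * ENNReal.ofReal (min (4/5) ((a+3)/5) - 3/5) +
    ENNReal.ofReal (65/62) * ENNReal.ofReal (min 1 ((a+4)/5) - 4/5) =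
    ENNReal.ofReal (30/31) * ENNReal.ofReal (min (3/5) a - 0) +
    ENNReal.ofReal (65/62) * ENNReal.ofReal (min 1 a - 3/5) := by
  have c1 : (0:ℝ) ≤ 30/31 := by norm_num
  have c2 : (0:ℝ) ≤ 65/62 := by norm_num
  rcases le_or_gt a 0 with h | h
  · rw [min_eq_right (by linarith : a/6 ≤ 1/10),
      min_eq_right (by linarith : (a-1/5)/4 ≤ 1/5),
      min_eq_right (by linarith : (a+1)/5 ≤ 2/5),
      min_eq_right (by linarith : (a+2)/5 ≤ 3/5),
      min_eq_right (by linarith : (a+3)/5 ≤ 4/5),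
      min_eq_right (by linarith : (a+4)/5 ≤ 1),
      min_eq_right (by linarith : a ≤ 3/5),
      min_eq_right (by linarith : a ≤ 1),
      ENNReal.ofReal_of_nonpos (by linarith : a/6 - 0 ≤ 0),
      ENNReal.ofReal_of_nonpos (by linarith : (a-1/5)/4 - 1/10 ≤ 0),
      ENNReal.ofReal_of_nonpos (by linarith : (a+1)/5 - 1/5 ≤ 0),
      ENNReal.ofReal_of_nonpos (by linarith : (a+2)/5 - 2/5 ≤ 0),
      ENNReal.ofReal_of_nonpos (by linarith : (a+3)/5 - 3/5 ≤ 0),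
      ENNReal.ofReal_of_nonpos (by linarith : (a+4)/5 - 4/5 ≤ 0),
      ENNReal.ofReal_of_nonpos (by linarith : a - 0 ≤ 0),
      ENNReal.ofReal_of_nonpos (by linarith : a - 3/5 ≤ 0)]
    simp
  rcases le_or_gt a (3/5) with h2 | h2
  · rw [min_eq_right (by linarith : a/6 ≤ 1/10),
      min_eq_right (by linarith : (a-1/5)/4 ≤ 1/5),
      min_eq_right (by linarith : (a+1)/5 ≤ 2/5),
      min_eq_right (by linarith : (a+2)/5 ≤ 3/5),
      min_eq_right (by linarith : (a+3)/5 ≤ 4/5),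
      min_eq_right (by linarith : (a+4)/5 ≤ 1),
      min_eq_right (by linarith : a ≤ 3/5),
      min_eq_right (by linarith : a ≤ 1),
      ENNReal.ofReal_of_nonpos (by linarith : (a-1/5)/4 - 1/10 ≤ 0),
      ENNReal.ofReal_of_nonpos (by linarith : a - 3/5 ≤ 0), mul_zero, add_zero, mul_zero,
      add_zero]
    simp only [← ENNReal.ofReal_mul c1, ← ENNReal.ofReal_mul c2]
    exact ofReal5_eq_ofReal1 (by linarith) (by linarith) (by linarith) (by linarith)
      (by linarith) (by ring)
  rcases le_or_gt a 1 with h3 | h3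
  · rw [min_eq_left (by linarith : (1:ℝ)/10 ≤ a/6),
      min_eq_right (by linarith : (a-1/5)/4 ≤ 1/5),
      min_eq_right (by linarith : (a+1)/5 ≤ 2/5),
      min_eq_right (by linarith : (a+2)/5 ≤ 3/5),
      min_eq_right (by linarith : (a+3)/5 ≤ 4/5),
      min_eq_right (by linarith : (a+4)/5 ≤ 1),
      min_eq_left (by linarith : (3:ℝ)/5 ≤ a),
      min_eq_right (by linarith : a ≤ 1)]
    simp only [← ENNReal.ofReal_mul c1, ← ENNReal.ofReal_mul c2]
    exact ofReal6_eq_ofReal2 (by linarith) (by linarith) (by linarith) (by linarith)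
      (by linarith) (by linarith) (by linarith) (by linarith) (by ring)
  · rw [min_eq_left (by linarith : (1:ℝ)/10 ≤ a/6),
      min_eq_left (by linarith : (1:ℝ)/5 ≤ (a-1/5)/4),
      min_eq_left (by linarith : (2:ℝ)/5 ≤ (a+1)/5),
      min_eq_left (by linarith : (3:ℝ)/5 ≤ (a+2)/5),
      min_eq_left (by linarith : (4:ℝ)/5 ≤ (a+3)/5),
      min_eq_left (by linarith : (1:ℝ) ≤ (a+4)/5),
      min_eq_left (by linarith : (3:ℝ)/5 ≤ a),
      min_eq_left (by linarith : (1:ℝ) ≤ a)]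
    simp only [← ENNReal.ofReal_mul c1, ← ENNReal.ofReal_mul c2]
    exact ofReal6_eq_ofReal2 (by norm_num) (by norm_num) (by norm_num) (by norm_num)
      (by norm_num) (by norm_num) (by norm_num) (by norm_num) (by norm_num)


lemma densMeasure_pre_Iic (a : ℝ) :
    densMeasure fEx3 (selEx3 ⁻¹' Iic a) = densMeasure fEx3 (Iic a) := by
  set s1 := Icc (0:ℝ) (1/10) ∩ Iic (a/6) with hs1
  set s2 := Ioo (1/10:ℝ) (1/5) ∩ Iic ((a-1/5)/4) with hs2
  set s3 := Ico (1/5:ℝ) (2/5) ∩ Iic ((a+1)/5) with hs3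
  set s4 := Ico (2/5:ℝ) (3/5) ∩ Iic ((a+2)/5) with hs4
  set s5 := Ico (3/5:ℝ) (4/5) ∩ Iic ((a+3)/5) with hs5
  set s6 := Icc (4/5:ℝ) 1 ∩ Iic ((a+4)/5) with hs6
  set r1 := Ico (0:ℝ) (3/5) ∩ Iic a with hr1
  set r2 := Icc (3/5:ℝ) 1 ∩ Iic a with hr2
  have hm1 : MeasurableSet s1 := measurableSet_Icc.inter measurableSet_Iic
  have hm2 : MeasurableSet s2 := measurableSet_Ioo.inter measurableSet_Iic
  have hm3 : MeasurableSet s3 := measurableSet_Ico.inter measurableSet_Iic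
  have hm4 : MeasurableSet s4 := measurableSet_Ico.inter measurableSet_Iic
  have hm5 : MeasurableSet s5 := measurableSet_Ico.inter measurableSet_Iic
  have hm6 : MeasurableSet s6 := measurableSet_Icc.inter measurableSet_Iic
  have hmr1 : MeasurableSet r1 := measurableSet_Ico.inter measurableSet_Iic
  have hmr2 : MeasurableSet r2 := measurableSet_Icc.inter measurableSet_Iic
  have d12 : Disjoint s1 s2 := disjoint_left.mpr (by rintro x ⟨⟨u,v⟩,-⟩ ⟨⟨w,z⟩,-⟩; linarith)
  have d13 : Disjoint s1 s3 := disjoint_left.mpr (by rintro x ⟨⟨u,v⟩,-⟩ ⟨⟨w,z⟩,-⟩; linarith)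
  have d14 : Disjoint s1 s4 := disjoint_left.mpr (by rintro x ⟨⟨u,v⟩,-⟩ ⟨⟨w,z⟩,-⟩; linarith)
  have d15 : Disjoint s1 s5 := disjoint_left.mpr (by rintro x ⟨⟨u,v⟩,-⟩ ⟨⟨w,z⟩,-⟩; linarith)
  have d16 : Disjoint s1 s6 := disjoint_left.mpr (by rintro x ⟨⟨u,v⟩,-⟩ ⟨⟨w,z⟩,-⟩; linarith)
  have d23 : Disjoint s2 s3 := disjoint_left.mpr (by rintro x ⟨⟨u,v⟩,-⟩ ⟨⟨w,z⟩,-⟩; linarith)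
  have d24 : Disjoint s2 s4 := disjoint_left.mpr (by rintro x ⟨⟨u,v⟩,-⟩ ⟨⟨w,z⟩,-⟩; linarith)
  have d25 : Disjoint s2 s5 := disjoint_left.mpr (by rintro x ⟨⟨u,v⟩,-⟩ ⟨⟨w,z⟩,-⟩; linarith)
  have d26 : Disjoint s2 s6 := disjoint_left.mpr (by rintro x ⟨⟨u,v⟩,-⟩ ⟨⟨w,z⟩,-⟩; linarith)
  have d34 : Disjoint s3 s4 := disjoint_left.mpr (by rintro x ⟨⟨u,v⟩,-⟩ ⟨⟨w,z⟩,-⟩; linarith)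
  have d35 : Disjoint s3 s5 := disjoint_left.mpr (by rintro x ⟨⟨u,v⟩,-⟩ ⟨⟨w,z⟩,-⟩; linarith)
  have d36 : Disjoint s3 s6 := disjoint_left.mpr (by rintro x ⟨⟨u,v⟩,-⟩ ⟨⟨w,z⟩,-⟩; linarith)
  have d45 : Disjoint s4 s5 := disjoint_left.mpr (by rintro x ⟨⟨u,v⟩,-⟩ ⟨⟨w,z⟩,-⟩; linarith)
  have d46 : Disjoint s4 s6 := disjoint_left.mpr (by rintro x ⟨⟨u,v⟩,-⟩ ⟨⟨w,z⟩,-⟩; linarith)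
  have d56 : Disjoint s5 s6 := disjoint_left.mpr (by rintro x ⟨⟨u,v⟩,-⟩ ⟨⟨w,z⟩,-⟩; linarith)
  have dr : Disjoint r1 r2 := disjoint_left.mpr (by rintro x ⟨⟨u,v⟩,-⟩ ⟨⟨w,z⟩,-⟩; linarith)
  have hIic : Iic a ∩ Icc 0 1 = r1 ∪ r2 := by
    rw [hr1, hr2]
    ext x
    simp only [mem_inter_iff, mem_Iic, mem_Icc, mem_union, mem_Ico]
    constructor
    · rintro ⟨h, h0, h1⟩
      rcases lt_or_ge x (3/5) with hx | hx
      · exact Or.inl ⟨⟨h0, hx⟩, h⟩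
      · exact Or.inr ⟨⟨hx, h1⟩, h⟩
    · rintro (⟨⟨u, v⟩, w⟩ | ⟨⟨u, v⟩, w⟩)
      · exact ⟨w, u, by linarith⟩
      · exact ⟨w, by linarith, v⟩
  rw [densMeasure_inter_Icc (meas_selEx3 measurableSet_Iic),
    densMeasure_inter_Icc measurableSet_Iic, pre_Iic a, hIic,
    ← hs1, ← hs2, ← hs3, ← hs4, ← hs5, ← hs6]
  rw [measure_union ((((d16.union_left d26).union_left d36).union_left d46).union_left d56) hm6,
    measure_union (((d15.union_left d25).union_left d35).union_left d45) hm5,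
    measure_union ((d14.union_left d24).union_left d34) hm4,
    measure_union (d13.union_left d23) hm3,
    measure_union d12 hm2,
    measure_union dr hmr2]
  have e1 : densMeasure fEx3 s1 = ENNReal.ofReal (30/31) * volume s1 :=
    densMeasure_const hm1 (by rintro x ⟨⟨h0, h1⟩, -⟩; exact ⟨h0, by linarith⟩)
      (fun x hx => fEx3_left (by rcases hx with ⟨⟨-, h⟩, -⟩; linarith))
  have e2 : densMeasure fEx3 s2 = ENNReal.ofReal (30/31) * volume s2 :=
    densMeasure_const hm2 (by rintro x ⟨⟨h0, h1⟩, -⟩; exact ⟨by linarith, by linarith⟩)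
      (fun x hx => fEx3_left (by rcases hx with ⟨⟨-, h⟩, -⟩; linarith))
  have e3 : densMeasure fEx3 s3 = ENNReal.ofReal (30/31) * volume s3 :=
    densMeasure_const hm3 (by rintro x ⟨⟨h0, h1⟩, -⟩; exact ⟨by linarith, by linarith⟩)
      (fun x hx => fEx3_left (by rcases hx with ⟨⟨-, h⟩, -⟩; linarith))
  have e4 : densMeasure fEx3 s4 = ENNReal.ofReal (30/31) * volume s4 :=
    densMeasure_const hm4 (by rintro x ⟨⟨h0, h1⟩, -⟩; exact ⟨by linarith, by linarith⟩)
      (fun x hx => fEx3_left (by rcases hx with ⟨⟨-, h⟩, -⟩; linarith))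
  have e5 : densMeasure fEx3 s5 = ENNReal.ofReal (65/62) * volume s5 :=
    densMeasure_const hm5 (by rintro x ⟨⟨h0, h1⟩, -⟩; exact ⟨by linarith, by linarith⟩)
      (fun x hx => fEx3_right (by rcases hx with ⟨⟨h, -⟩, -⟩; linarith))
  have e6 : densMeasure fEx3 s6 = ENNReal.ofReal (65/62) * volume s6 :=
    densMeasure_const hm6 (by rintro x ⟨⟨h0, h1⟩, -⟩; exact ⟨by linarith, by linarith⟩)
      (fun x hx => fEx3_right (by rcases hx with ⟨⟨h, -⟩, -⟩; linarith))
  have er1 : densMeasure fEx3 r1 = ENNReal.ofReal (30/31) * volume r1 :=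
    densMeasure_const hmr1 (by rintro x ⟨⟨h0, h1⟩, -⟩; exact ⟨by linarith, by linarith⟩)
      (fun x hx => fEx3_left (by rcases hx with ⟨⟨-, h⟩, -⟩; linarith))
  have er2 : densMeasure fEx3 r2 = ENNReal.ofReal (65/62) * volume r2 :=
    densMeasure_const hmr2 (by rintro x ⟨⟨h0, h1⟩, -⟩; exact ⟨by linarith, by linarith⟩)
      (fun x hx => fEx3_right (by rcases hx with ⟨⟨h, -⟩, -⟩; linarith))
  rw [e1, e2, e3, e4, e5, e6, er1, er2, hs1, hs2, hs3, hs4, hs5, hs6, hr1, hr2,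
    vol_Icc_inter_Iic, vol_Ioo_inter_Iic, vol_Ico_inter_Iic, vol_Ico_inter_Iic,
    vol_Ico_inter_Iic, vol_Icc_inter_Iic, vol_Ico_inter_Iic, vol_Icc_inter_Iic]
  exact keyEx3 a

lemma integral_fEx3 : ∫ x in Set.Icc (0:ℝ) 1, fEx3 x = 1 := by
  have hu : Icc (0:ℝ) 1 = Ico 0 (3/5) ∪ Icc (3/5) 1 :=
    (Ico_union_Icc_eq_Icc (by norm_num) (by norm_num)).symm
  have hd : Disjoint (Ico (0:ℝ) (3/5)) (Icc (3/5) 1) :=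
    disjoint_left.mpr (by rintro x ⟨u, v⟩ ⟨w, z⟩; linarith)
  have hi1 : IntegrableOn fEx3 (Ico (0:ℝ) (3/5)) volume := by
    refine (IntegrableOn.congr_fun (f := fun _ => (30/31:ℝ)) ?_ ?_ measurableSet_Ico)
    · rw [integrableOn_const_iff]
      exact Or.inr (by rw [Real.volume_Ico]; exact ENNReal.ofReal_lt_top)
    · exact fun x hx => (fEx3_left hx.2).symm
  have hi2 : IntegrableOn fEx3 (Icc (3/5:ℝ) 1) volume := by
    refine (IntegrableOn.congr_fun (f := fun _ => (65/62:ℝ)) ?_ ?_ measurableSet_Icc)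
    · rw [integrableOn_const_iff]
      exact Or.inr (by rw [Real.volume_Icc]; exact ENNReal.ofReal_lt_top)
    · exact fun x hx => (fEx3_right hx.1).symm
  rw [hu, setIntegral_union hd measurableSet_Icc hi1 hi2,
    setIntegral_congr_fun measurableSet_Ico (g := fun _ => (30/31:ℝ))
      (fun x hx => fEx3_left hx.2),
    setIntegral_congr_fun measurableSet_Icc (g := fun _ => (65/62:ℝ))
      (fun x hx => fEx3_right hx.1),
    setIntegral_const, setIntegral_const, measureReal_def, measureReal_def, Real.volume_Ico, Real.volume_Icc,
    ENNReal.toReal_ofReal (by norm_num), ENNReal.toReal_ofReal (by norm_num)]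
  norm_num


/-- (Example 3 of the paper.)  The function
`f = (30/31)·1_{[0,3/5)} + (65/62)·1_{[3/5,1]}` is a probability density and the measure
`f·λ_Leb` is invariant under the selector `𝝉`. -/
theorem selector_example3_preserves_density :
    IsDensity fEx3 ∧
    ∀ A : Set ℝ, MeasurableSet A →
      densMeasure fEx3 (selEx3 ⁻¹' A) = densMeasure fEx3 A := by
  constructor
  · exact ⟨meas_fEx3, fun x => by unfold fEx3; split_ifs <;> norm_num, integral_fEx3⟩
  · intro A hA
    have hmap : Measure.map selEx3 (densMeasure fEx3) = densMeasure fEx3 := by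
      have : IsFiniteMeasure (Measure.map selEx3 (densMeasure fEx3)) :=
        Measure.isFiniteMeasure_map _ _
      refine Measure.ext_of_Iic _ _ (fun a => ?_)
      rw [Measure.map_apply meas_selEx3 measurableSet_Iic]
      exact densMeasure_pre_Iic a
    rw [← Measure.map_apply meas_selEx3 hA, hmap]
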